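/- Let K₁ ⊆ ℂ^m be compact, ω : K₁ → ℂ a continuous function, and K = {(z, ω(z)) : z ∈ K₁} ⊆ ℂ^{m+1} the graph of ω. Suppose every function in A_D(K₁) is a uniform limit on K₁ of functions holomorphic on open neighborhoods of K₁, and ω ∈ A_D(K₁). Then every function in A_D(K) is a uniform limit on K of functions holomorphic on open neighborhoods of K ⊆ ℂ^{m+1}. -/

import Mathlib

/-- `AD S f` means `f` is continuous on `S` and holomorphic along every
injective holomorphic disc contained in `S` (the algebra `A_D(S)`). -/
def AD {n : ℕ} (S : Set (Fin n → ℂ)) (f : (Fin n → ℂ) → ℂ) : Prop :=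
  ContinuousOn f S ∧
    ∀ (c : ℂ) (r : ℝ), 0 < r → ∀ φ : ℂ → (Fin n → ℂ),
      DifferentiableOn ℂ φ (Metric.ball c r) →
      Set.InjOn φ (Metric.ball c r) →
      Set.MapsTo φ (Metric.ball c r) S →
      DifferentiableOn ℂ (f ∘ φ) (Metric.ball c r)

/-- Mergelyan-type theorem on graphs: if every function of `A_D(K₁)` is a
uniform limit on `K₁` of functions holomorphic on neighbourhoods of `K₁`, and
`ω ∈ A_D(K₁)`, then the same approximation property holds for `A_D(K)` where
`K ⊆ ℂ^{m+1}` is the graph of `ω` over `K₁`. -/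
theorem stmt11 (m : ℕ) (K₁ : Set (Fin m → ℂ)) (hK₁ : IsCompact K₁)
    (ω : (Fin m → ℂ) → ℂ) (hω : AD K₁ ω)
    (happrox : ∀ f : (Fin m → ℂ) → ℂ, AD K₁ f → ∀ ε > (0 : ℝ),
      ∃ (g : (Fin m → ℂ) → ℂ) (V : Set (Fin m → ℂ)),
        IsOpen V ∧ K₁ ⊆ V ∧ DifferentiableOn ℂ g V ∧
        ∀ z ∈ K₁, ‖f z - g z‖ < ε) :
    ∀ F : (Fin (m + 1) → ℂ) → ℂ,
      AD {p : Fin (m + 1) → ℂ | ∃ z ∈ K₁, p = Fin.snoc z (ω z)} F →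
      ∀ ε > (0 : ℝ),
        ∃ (G : (Fin (m + 1) → ℂ) → ℂ) (W : Set (Fin (m + 1) → ℂ)),
          IsOpen W ∧ {p : Fin (m + 1) → ℂ | ∃ z ∈ K₁, p = Fin.snoc z (ω z)} ⊆ W ∧
          DifferentiableOn ℂ G W ∧
          ∀ p ∈ {p : Fin (m + 1) → ℂ | ∃ z ∈ K₁, p = Fin.snoc z (ω z)},
            ‖F p - G p‖ < ε := by
  intro F hF ε hε
  set K : Set (Fin (m + 1) → ℂ) := {p | ∃ z ∈ K₁, p = Fin.snoc z (ω z)} with hK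
  set Ψ : (Fin m → ℂ) → (Fin (m + 1) → ℂ) := fun z => Fin.snoc z (ω z) with hΨ
  have hΨmaps : Set.MapsTo Ψ K₁ K := fun z hz => ⟨z, hz, rfl⟩
  -- continuity of Ψ on K₁
  have hΨcont : ContinuousOn Ψ K₁ := by
    apply continuousOn_pi.2
    intro i
    refine Fin.lastCases ?_ ?_ i
    · simpa [hΨ] using hω.1
    · intro j
      simpa [hΨ] using (continuous_apply j).continuousOn
  -- F ∘ Ψ is in AD K₁
  have hFΨ : AD K₁ (F ∘ Ψ) := by
    constructor
    · exact hF.1.comp hΨcont hΨmaps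
    · intro c r hr φ hφd hφi hφm
      have hωφ : DifferentiableOn ℂ (ω ∘ φ) (Metric.ball c r) :=
        hω.2 c r hr φ hφd hφi hφm
      have hΨφd : DifferentiableOn ℂ (Ψ ∘ φ) (Metric.ball c r) := by
        apply differentiableOn_pi.2
        intro i
        refine Fin.lastCases ?_ ?_ i
        · simpa [hΨ, Function.comp_def] using hωφ
        · intro j
          simpa [hΨ, Function.comp] using (differentiableOn_pi.1 hφd) j
      have hΨφi : Set.InjOn (Ψ ∘ φ) (Metric.ball c r) := by
        intro x hx y hy hxy
        apply hφi hx hy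
        have := congrArg Fin.init hxy
        simpa [hΨ, Function.comp, Fin.init_snoc] using this
      have hΨφm : Set.MapsTo (Ψ ∘ φ) (Metric.ball c r) K :=
        hΨmaps.comp hφm
      have := hF.2 c r hr (Ψ ∘ φ) hΨφd hΨφi hΨφm
      simpa [Function.comp_def] using this
  obtain ⟨g, V, hVopen, hKV, hgd, hgap⟩ := happrox (F ∘ Ψ) hFΨ ε hε
  -- init : ℂ^{m+1} → ℂ^m
  have hinitd : Differentiable ℂ (fun p : Fin (m + 1) → ℂ => Fin.init p) := by
    apply differentiable_pi.2
    intro i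
    exact differentiable_apply _
  refine ⟨fun p => g (Fin.init p), (fun p : Fin (m + 1) → ℂ => Fin.init p) ⁻¹' V,
    hVopen.preimage hinitd.continuous, ?_, ?_, ?_⟩
  · rintro p ⟨z, hz, rfl⟩
    simpa [Fin.init_snoc] using hKV hz
  · exact hgd.comp hinitd.differentiableOn (fun p hp => hp)
  · rintro p ⟨z, hz, rfl⟩
    have := hgap z hz
    simpa [hΨ, Function.comp, Fin.init_snoc] using this
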